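/- Let p be a prime, m a positive integer, and p' a p-primitive divisor of p^m − 1. Let G = GL_{F_p}(F × F) be the group of F_p-linear bijections of F × F, and let S = {(x,y) ↦ (r·x, r·y) : r ∈ F^*} and S_R = {(x,y) ↦ (r·x, r·y) : r ∈ R} be subgroups of G. Then the centralizer of S_R in G equals the centralizer of S in G, and both equal the set of bijective maps of the form (x,y) ↦ (c₁·x + c₂·y, c₃·x + c₄·y) with c₁, c₂, c₃, c₄ ∈ F, i.e., the set of bijective F-linear maps of F × F. -/

import Mathlib

open scoped Classical
noncomputable section

abbrev GF (p m : ℕ) [Fact p.Prime] := GaloisField p m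

/-- The Taniguchi multiplication `T(q,α,a,b)` on `F × F` where `F = F_{p^m}`. -/
def taniMul (p m : ℕ) [Fact p.Prime] (q : ℕ) (α a b : GF p m) :
    GF p m × GF p m → GF p m × GF p m → GF p m × GF p m :=
  fun w z =>
    (w.1 ^ q * z.1 + α ^ q ^ 2 * w.1 * z.1 ^ q
       - a * (w.1 * z.2 ^ q - α ^ q * z.1 * w.2 ^ q)
       - b * (w.2 ^ q * z.2 + α * w.2 * z.2 ^ q),
     w.1 * z.2 ^ q ^ 2 + w.2 ^ q ^ 2 * z.1)

/-- Two multiplications on `F × F` are isotopic if there are `F_p`-linear bijections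
`N, L, M` with `N (w ∘₁ z) = L w ∘₂ M z` for all `w, z`. -/
def Isotopic (p m : ℕ) [Fact p.Prime]
    (mul1 mul2 : GF p m × GF p m → GF p m × GF p m → GF p m × GF p m) : Prop :=
  ∃ N L M : (GF p m × GF p m) ≃ₗ[ZMod p] GF p m × GF p m,
    ∀ w z, N (mul1 w z) = mul2 (L w) (M z)

/-- `p'` is a `p`-primitive divisor of `p^m - 1`. -/
def IsPrimitiveDivisor (p m p' : ℕ) : Prop :=
  p'.Prime ∧ p' ∣ p ^ m - 1 ∧ ∀ j : ℕ, 1 ≤ j → j < m → ¬ p' ∣ p ^ j - 1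

/-- Scalar multiplication by a nonzero `r` as a `ZMod p`-linear equivalence of `F × F`. -/
def scMap (p m : ℕ) [Fact p.Prime] (r : GF p m) (hr : r ≠ 0) :
    (GF p m × GF p m) ≃ₗ[ZMod p] GF p m × GF p m where
  toFun w := (r * w.1, r * w.2)
  invFun w := (r⁻¹ * w.1, r⁻¹ * w.2)
  map_add' a b := by simp [Prod.ext_iff]; constructor <;> ring
  map_smul' z w := by simp [Prod.smul_def, mul_smul_comm]
  left_inv w := by simp [← mul_assoc, inv_mul_cancel₀ hr]
  right_inv w := by simp [← mul_assoc, mul_inv_cancel₀ hr]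

lemma subalg_eq_top (p m p' : ℕ) [Fact p.Prime] (hm : 0 < m)
    (hp'1 : p'.Prime) (hp'3 : ∀ j : ℕ, 1 ≤ j → j < m → ¬ p' ∣ p ^ j - 1)
    (r₀ : GF p m) (hr : orderOf r₀ = p') (hr0 : r₀ ≠ 0)
    (A : Subalgebra (ZMod p) (GF p m)) (hA : r₀ ∈ A) : A = ⊤ := by
  haveI : Fintype (GF p m) := Fintype.ofFinite _
  haveI : Fintype A := Fintype.ofFinite _
  haveI : IsDomain A := inferInstance
  letI : Field A := (Finite.isField_of_domain A).toField
  set a : A := ⟨r₀, hA⟩ with ha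
  have ha0 : a ≠ 0 := by
    intro h
    exact hr0 (by simpa [ha, Subtype.ext_iff] using h)
  have hpow : a ^ (Fintype.card A - 1) = 1 := FiniteField.pow_card_sub_one_eq_one a ha0
  have horder : orderOf a = p' := by
    rw [← hr]
    exact (orderOf_injective (A.val : A →* GF p m) Subtype.val_injective a).symm
  have hdvd : p' ∣ Fintype.card A - 1 := by
    rw [← horder]; exact orderOf_dvd_of_pow_eq_one hpow
  have hcard : Fintype.card A = p ^ Module.finrank (ZMod p) A := by
    rw [Module.card_eq_pow_finrank (K := ZMod p) (V := A), ZMod.card]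
  set k := Module.finrank (ZMod p) A with hk
  have hfin : Module.finrank (ZMod p) (GF p m) = m := GaloisField.finrank p hm.ne'
  have hkle : k ≤ m := by
    rw [← hfin]
    exact (Subalgebra.toSubmodule A).finrank_le
  have hk1 : 1 ≤ k := by
    have : Nontrivial A := ⟨⟨0, 1, fun h => zero_ne_one (congrArg Subtype.val h)⟩⟩
    exact Module.finrank_pos
  have hkm : k = m := by
    by_contra h
    exact hp'3 k hk1 (lt_of_le_of_ne hkle h) (by rwa [← hcard])
  have : Subalgebra.toSubmodule A = ⊤ := by
    apply Submodule.eq_top_of_finrank_eq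
    rw [hfin]
    exact hkm
  exact Algebra.toSubmodule_eq_top.mp this

/-- Lemma 4(b): the centralizers of `S_R` and `S` in `GL_{F_p}(F × F)` coincide and
consist exactly of the bijective `F`-linear maps `(x,y) ↦ (c₁x + c₂y, c₃x + c₄y)`. -/
theorem centralizer_S_R (p m p' : ℕ) [Fact p.Prime] (hm : 0 < m)
    (hp' : IsPrimitiveDivisor p m p') :
    let S : Set ((GF p m × GF p m) ≃ₗ[ZMod p] GF p m × GF p m) :=
      {e | ∃ r : GF p m, r ≠ 0 ∧ ∀ w : GF p m × GF p m, e w = (r * w.1, r * w.2)}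
    let S_R : Set ((GF p m × GF p m) ≃ₗ[ZMod p] GF p m × GF p m) :=
      {e | ∃ r : GF p m, r ≠ 0 ∧ (∃ j : ℕ, orderOf r = p' ^ j) ∧
        ∀ w : GF p m × GF p m, e w = (r * w.1, r * w.2)}
    Subgroup.centralizer S_R = Subgroup.centralizer S ∧
      (Subgroup.centralizer S : Set ((GF p m × GF p m) ≃ₗ[ZMod p] GF p m × GF p m)) =
        {e | ∃ c₁ c₂ c₃ c₄ : GF p m,
          ∀ w : GF p m × GF p m,
            e w = (c₁ * w.1 + c₂ * w.2, c₃ * w.1 + c₄ * w.2)} := by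
  intro S S_R
  obtain ⟨hp'1, hp'2, hp'3⟩ := hp'
  haveI : Fintype (GF p m) := Fintype.ofFinite _
  haveI := Fact.mk hp'1
  have hcardU : Fintype.card (GF p m)ˣ = p ^ m - 1 := by
    rw [Fintype.card_units, Fintype.card_eq_nat_card, GaloisField.card p m hm.ne']
  obtain ⟨u, hu⟩ := exists_prime_orderOf_dvd_card p' (by rw [hcardU]; exact hp'2)
  have hr₀ : orderOf (u : GF p m) = p' := by rw [orderOf_units]; exact hu
  have hr₀0 : (u : GF p m) ≠ 0 := u.ne_zero
  have hsc : scMap p m (u : GF p m) hr₀0 ∈ S_R :=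
    ⟨(u : GF p m), hr₀0, ⟨1, by simpa using hr₀⟩, fun w => rfl⟩
  -- Step 1 : centralizer S_R is contained in the set of F-linear maps
  have h1 : ∀ e, e ∈ Subgroup.centralizer S_R →
      ∃ c₁ c₂ c₃ c₄ : GF p m, ∀ w : GF p m × GF p m,
        e w = (c₁ * w.1 + c₂ * w.2, c₃ * w.1 + c₄ * w.2) := by
    intro e he
    have hcomm := (Subgroup.mem_centralizer_iff.mp he) _ hsc
    have hmem : ∀ w : GF p m × GF p m,
        e ((u : GF p m) * w.1, (u : GF p m) * w.2)
          = ((u : GF p m) * (e w).1, (u : GF p m) * (e w).2) := by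
      intro w
      have := DFunLike.congr_fun hcomm w
      exact ((show (scMap p m _ hr₀0 * e) w = ((u:GF p m) * (e w).1, (u:GF p m) * (e w).2)
        from rfl) ▸ this).symm
    set A : Subalgebra (ZMod p) (GF p m) :=
      { carrier := {c | ∀ w : GF p m × GF p m,
          e (c * w.1, c * w.2) = (c * (e w).1, c * (e w).2)}
        add_mem' := by
          intro c d hc hd w
          have : ((c + d) * w.1, (c + d) * w.2)
              = ((c * w.1, c * w.2) + (d * w.1, d * w.2) : GF p m × GF p m) := by
            simp [Prod.ext_iff]; constructor <;> ring
          rw [this, map_add, hc w, hd w]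
          simp [Prod.ext_iff]; constructor <;> ring
        mul_mem' := by
          intro c d hc hd w
          have : ((c * d) * w.1, (c * d) * w.2)
              = (c * (d * w.1, d * w.2).1, c * (d * w.1, d * w.2).2) := by
            simp [mul_assoc]
          rw [this, hc (d * w.1, d * w.2), hd w]
          simp [mul_assoc]
        algebraMap_mem' := by
          intro z w
          have h1 : ((algebraMap (ZMod p) (GF p m) z) * w.1,
              (algebraMap (ZMod p) (GF p m) z) * w.2) = z • w :=
            Prod.ext (Algebra.smul_def z w.1).symm (Algebra.smul_def z w.2).symm
          have h2 : ((algebraMap (ZMod p) (GF p m) z) * (e w).1,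
              (algebraMap (ZMod p) (GF p m) z) * (e w).2) = z • (e w) :=
            Prod.ext (Algebra.smul_def z (e w).1).symm (Algebra.smul_def z (e w).2).symm
          rw [h1, h2, map_smul] }
    have hA : A = ⊤ := subalg_eq_top p m p' hm hp'1 hp'3 _ hr₀ hr₀0 A hmem
    have hlin : ∀ (c : GF p m) (w : GF p m × GF p m),
        e (c * w.1, c * w.2) = (c * (e w).1, c * (e w).2) := by
      intro c
      have : c ∈ A := hA.symm ▸ Algebra.mem_top
      exact this
    refine ⟨(e (1, 0)).1, (e (0, 1)).1, (e (1, 0)).2, (e (0, 1)).2, fun w => ?_⟩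
    calc e w = e ((w.1 * 1, w.1 * 0) + (w.2 * 0, w.2 * 1)) := by
          congr 1; simp [Prod.ext_iff]
      _ = e (w.1 * 1, w.1 * 0) + e (w.2 * 0, w.2 * 1) := map_add e _ _
      _ = (w.1 * (e (1, 0)).1, w.1 * (e (1, 0)).2)
            + (w.2 * (e (0, 1)).1, w.2 * (e (0, 1)).2) := by
          rw [hlin w.1 (1, 0), hlin w.2 (0, 1)]
      _ = _ := by simp [Prod.ext_iff]; constructor <;> ring
  -- Step 2 : the set of F-linear maps is contained in centralizer S
  have h2 : ∀ e : (GF p m × GF p m) ≃ₗ[ZMod p] GF p m × GF p m,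
      (∃ c₁ c₂ c₃ c₄ : GF p m, ∀ w : GF p m × GF p m,
        e w = (c₁ * w.1 + c₂ * w.2, c₃ * w.1 + c₄ * w.2)) →
      e ∈ Subgroup.centralizer S := by
    rintro e ⟨c₁, c₂, c₃, c₄, hc⟩
    rw [Subgroup.mem_centralizer_iff]
    rintro g ⟨r, hr0, hg⟩
    apply LinearEquiv.toLinearMap_injective
    apply LinearMap.ext
    intro w
    show g (e w) = e (g w)
    rw [hc w, hg, hg w, hc]
    simp only [Prod.ext_iff]
    constructor <;> ring
  -- Step 3 : centralizer S ≤ centralizer S_R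
  have h3 : Subgroup.centralizer S ≤ Subgroup.centralizer S_R :=
    Subgroup.centralizer_le (fun e ⟨r, hr1, _, hr3⟩ => ⟨r, hr1, hr3⟩)
  constructor
  · apply le_antisymm
    · intro e he
      exact h2 e (h1 e he)
    · exact h3
  · apply Set.Subset.antisymm
    · intro e he
      exact h1 e (h3 he)
    · intro e he
      exact h2 e he
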